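/- arXiv:2005.10670 — 2 statements merged into one kernel-verified Lean document; each statement's English description precedes it below -/
import Mathlib

section
/- Let D_f, D_q ⊂ ℝ³ be compact convex sets separated by a hyperplane with unit normal n, with dist(D_f, D_q) > 0, and let x̂ ∈ 𝕊² satisfy x̂·n ≥ 0. Then there is a constant δ > 0 (depending on D_f, D_q but not on x̂) such that for all y ∈ D_q and s ∈ D_f, |(s - y)/|s - y| − x̂| ≥ δ. -/
/-- Uniform lower bound on `|∇_y φ| = |(s-y)/|s-y| - x̂|` over `y ∈ D_q`, `s ∈ D_f` and
all observation directions `x̂` in the closed hemisphere `{x̂ : x̂·n ≥ 0}`, where `n` is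
the unit normal of a hyperplane separating `D_f` from `D_q`. -/
theorem stmt12 (Df Dq : Set (EuclideanSpace ℝ (Fin 3)))
    (hDf : Convex ℝ Df) (hDq : Convex ℝ Dq)
    (hDfc : IsCompact Df) (hDqc : IsCompact Dq)
    (n : EuclideanSpace ℝ (Fin 3)) (hn : ‖n‖ = 1)
    (hsep : ∃ c : ℝ, (∀ x ∈ Df, (inner ℝ x n : ℝ) < c) ∧ (∀ y ∈ Dq, c < (inner ℝ y n : ℝ)))
    (hdist : 0 < ⨅ (x : Df) (y : Dq), ‖(x : EuclideanSpace ℝ (Fin 3)) - y‖) :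
    ∃ δ : ℝ, 0 < δ ∧ ∀ xhat : EuclideanSpace ℝ (Fin 3), ‖xhat‖ = 1 →
      0 ≤ (inner ℝ xhat n : ℝ) → ∀ y ∈ Dq, ∀ s ∈ Df,
        δ ≤ ‖(‖s - y‖⁻¹ • (s - y)) - xhat‖ := by
  obtain ⟨c, hfc, hqc⟩ := hsep
  by_cases hne : Df.Nonempty ∧ Dq.Nonempty
  · obtain ⟨hfne, hqne⟩ := hne
    have hcont : Continuous fun x : EuclideanSpace ℝ (Fin 3) => (inner ℝ x n : ℝ) :=
      continuous_id.inner continuous_const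
    obtain ⟨s1, hs1, hs1max⟩ := hDfc.exists_isMaxOn hfne hcont.continuousOn
    obtain ⟨y1, hy1, hy1min⟩ := hDqc.exists_isMinOn hqne hcont.continuousOn
    obtain ⟨Rf, hRf⟩ := (isBounded_iff_forall_norm_le).1 hDfc.isBounded
    obtain ⟨Rq, hRq⟩ := (isBounded_iff_forall_norm_le).1 hDqc.isBounded
    set M : ℝ := |Rf| + |Rq| + 1 with hM
    have hMpos : 0 < M := by positivity
    set m : ℝ := (inner ℝ y1 n : ℝ) - (inner ℝ s1 n : ℝ) with hm
    have hmpos : 0 < m := by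
      have h1 := hfc s1 hs1
      have h2 := hqc y1 hy1
      simp only [hm]; linarith
    refine ⟨m / M, by positivity, ?_⟩
    intro xhat hxhat hxn y hy s hs
    have hinner : (inner ℝ (s - y) n : ℝ) ≤ -m := by
      have h1 : (inner ℝ s n : ℝ) ≤ inner ℝ s1 n := hs1max hs
      have h2 : (inner ℝ y1 n : ℝ) ≤ inner ℝ y n := hy1min hy
      have : (inner ℝ (s - y) n : ℝ) = (inner ℝ s n : ℝ) - (inner ℝ y n : ℝ) := by
        rw [inner_sub_left]
      rw [this, hm]; linarith
    have hsy : s - y ≠ 0 := by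
      intro h
      rw [h, inner_zero_left] at hinner
      linarith
    have hnorm_pos : 0 < ‖s - y‖ := norm_pos_iff.2 hsy
    have hnormM : ‖s - y‖ ≤ M := by
      have := hRf s hs
      have := hRq y hy
      have h := norm_sub_le s y
      have : |Rf| ≥ Rf := le_abs_self Rf
      have : |Rq| ≥ Rq := le_abs_self Rq
      calc ‖s - y‖ ≤ ‖s‖ + ‖y‖ := norm_sub_le s y
        _ ≤ |Rf| + |Rq| := by
            have h1 : ‖s‖ ≤ Rf := hRf s hs
            have h2 : ‖y‖ ≤ Rq := hRq y hy
            have h3 := le_abs_self Rf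
            have h4 := le_abs_self Rq
            linarith
        _ ≤ M := by simp [hM]
    -- inner ℝ of unit vector u with n is ≤ -m/M
    have hu : (inner ℝ (‖s - y‖⁻¹ • (s - y)) n : ℝ) ≤ -(m / M) := by
      rw [real_inner_smul_left]
      have h1 : ‖s - y‖⁻¹ ≥ M⁻¹ := by
        apply inv_anti₀ hnorm_pos hnormM
      have h2 : ‖s - y‖⁻¹ * (inner ℝ (s - y) n : ℝ) ≤ ‖s - y‖⁻¹ * (-m) := by
        exact mul_le_mul_of_nonneg_left hinner (by positivity)
      have h3 : ‖s - y‖⁻¹ * (-m) ≤ M⁻¹ * (-m) := by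
        have := mul_le_mul_of_nonneg_left h1 hmpos.le
        nlinarith
      have : M⁻¹ * (-m) = -(m / M) := by field_simp
      linarith
    have hdiff : (inner ℝ ((‖s - y‖⁻¹ • (s - y)) - xhat) n : ℝ) ≤ -(m / M) := by
      rw [inner_sub_left]
      linarith
    have habs : m / M ≤ |(inner ℝ ((‖s - y‖⁻¹ • (s - y)) - xhat) n : ℝ)| := by
      have hmM : 0 < m / M := by positivity
      have h : (inner ℝ ((‖s - y‖⁻¹ • (s - y)) - xhat) n : ℝ) < 0 := by linarith
      rw [abs_of_neg h]; linarith
    calc m / M ≤ |(inner ℝ ((‖s - y‖⁻¹ • (s - y)) - xhat) n : ℝ)| := habs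
      _ ≤ ‖(‖s - y‖⁻¹ • (s - y)) - xhat‖ * ‖n‖ := abs_real_inner_le_norm _ _
      _ = ‖(‖s - y‖⁻¹ • (s - y)) - xhat‖ := by rw [hn, mul_one]
  · refine ⟨1, one_pos, ?_⟩
    intro xhat _ _ y hy s hs
    exact absurd ⟨⟨s, hs⟩, ⟨y, hy⟩⟩ hne
end

section
/- Let D ⊂ ℝ³ be bounded with diameter d. Then for every x ∈ ℝ³, the double integral ∬_{D×D} |x−z|^{−1} |y−z|^{−2} |x−y|^{−1} dz dy is finite and bounded by C ⟨x⟩^{−2}, where C depends only on D and ⟨x⟩ = (1+|x|²)^{1/2}. -/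
open MeasureTheory
open scoped ENNReal

section Aux

local notation "E3" => EuclideanSpace ℝ (Fin 3)

private lemma stmt16_ball_lt_top :
    ∫⁻ w in Metric.ball (0 : EuclideanSpace ℝ (Fin 3)) 1,
      ENNReal.ofReal ((‖w‖ ^ 2)⁻¹) < ⊤ := by
  have hmf : Measurable fun w : E3 => (‖w‖ ^ 2)⁻¹ :=
    (measurable_norm.pow_const 2).inv
  rw [lintegral_eq_lintegral_meas_le _
    (Filter.Eventually.of_forall fun w => inv_nonneg.2 (sq_nonneg _)) hmf.aemeasurable]
  have hsplit : Set.Ioi (0:ℝ) = Set.Ioc (0:ℝ) 1 ∪ Set.Ioi (1:ℝ) :=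
    (Set.Ioc_union_Ioi_eq_Ioi zero_le_one).symm
  rw [hsplit, lintegral_union measurableSet_Ioi (Set.Ioc_disjoint_Ioi le_rfl)]
  have hb : volume (Metric.ball (0 : E3) 1) < ⊤ := measure_ball_lt_top
  apply ENNReal.add_lt_top.2
  constructor
  · calc ∫⁻ t in Set.Ioc (0:ℝ) 1,
        (volume.restrict (Metric.ball (0 : E3) 1)) {a | t ≤ (‖a‖ ^ 2)⁻¹}
        ≤ ∫⁻ _ in Set.Ioc (0:ℝ) 1, volume (Metric.ball (0 : E3) 1) := by
          apply lintegral_mono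
          intro t
          exact le_trans (measure_mono (Set.subset_univ _)) (by rw [Measure.restrict_apply_univ])
      _ = volume (Metric.ball (0 : E3) 1) * volume (Set.Ioc (0:ℝ) 1) := by
          rw [setLIntegral_const]
      _ < ⊤ := ENNReal.mul_lt_top hb (by simp [Real.volume_Ioc])
  · have key : ∀ t ∈ Set.Ioi (1:ℝ),
        (volume.restrict (Metric.ball (0 : E3) 1)) {a | t ≤ (‖a‖ ^ 2)⁻¹}
        ≤ ENNReal.ofReal (Real.sqrt t⁻¹ ^ 3) * volume (Metric.ball (0 : E3) 1) := by
      intro t ht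
      have ht1 : (1:ℝ) < t := ht
      have ht0 : (0:ℝ) < t := lt_trans one_pos ht1
      have hsub : {a : E3 | t ≤ (‖a‖ ^ 2)⁻¹} ⊆
          Metric.closedBall 0 (Real.sqrt t⁻¹) := by
        intro a ha
        simp only [Set.mem_setOf_eq] at ha
        have hs : ‖a‖ ^ 2 ≤ t⁻¹ := by
          rcases eq_or_lt_of_le (sq_nonneg ‖a‖) with h | h
          · rw [← h]; positivity
          · have h2 : (‖a‖ ^ 2) * t ≤ (‖a‖ ^ 2) * (‖a‖ ^ 2)⁻¹ :=
              mul_le_mul_of_nonneg_left ha (sq_nonneg _)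
            rw [mul_inv_cancel₀ (ne_of_gt h)] at h2
            nlinarith [mul_inv_cancel₀ (ne_of_gt ht0), inv_pos.2 ht0]
        have : ‖a‖ ≤ Real.sqrt t⁻¹ := by
          rw [← Real.sqrt_sq (norm_nonneg a)]
          exact Real.sqrt_le_sqrt hs
        simpa [Metric.mem_closedBall, dist_zero_right] using this
      calc (volume.restrict (Metric.ball (0 : E3) 1)) {a | t ≤ (‖a‖ ^ 2)⁻¹}
          ≤ volume (Metric.closedBall (0 : E3) (Real.sqrt t⁻¹)) :=
            le_trans (Measure.restrict_le_self _) (measure_mono hsub)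
        _ = ENNReal.ofReal (Real.sqrt t⁻¹ ^ Module.finrank ℝ E3) *
              volume (Metric.ball (0 : E3) 1) :=
            Measure.addHaar_closedBall _ _ (Real.sqrt_nonneg _)
        _ = _ := by rw [finrank_euclideanSpace_fin]
    calc ∫⁻ t in Set.Ioi (1:ℝ),
        (volume.restrict (Metric.ball (0 : E3) 1)) {a | t ≤ (‖a‖ ^ 2)⁻¹}
        ≤ ∫⁻ t in Set.Ioi (1:ℝ), ENNReal.ofReal (Real.sqrt t⁻¹ ^ 3) *
            volume (Metric.ball (0 : E3) 1) :=
          setLIntegral_mono_ae (by fun_prop) (Filter.Eventually.of_forall key)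
      _ = (∫⁻ t in Set.Ioi (1:ℝ), ENNReal.ofReal (Real.sqrt t⁻¹ ^ 3)) *
            volume (Metric.ball (0 : E3) 1) :=
          lintegral_mul_const' _ _ hb.ne
      _ < ⊤ := by
          apply ENNReal.mul_lt_top _ hb
          have hint : IntegrableOn (fun t : ℝ => t ^ (-(3:ℝ)/2)) (Set.Ioi 1) volume := by
            have := integrableOn_Ioi_rpow_of_lt (show (-(3:ℝ)/2) < -1 by norm_num) one_pos
            simpa using this
          have hfin := hint.2
          rw [hasFiniteIntegral_iff_norm] at hfin
          refine lt_of_le_of_lt (lintegral_mono_ae ?_) hfin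
          filter_upwards [ae_restrict_mem measurableSet_Ioi] with t ht
          have ht0 : (0:ℝ) < t := lt_trans one_pos ht
          have : Real.sqrt t⁻¹ ^ 3 = t ^ (-(3:ℝ)/2) := by
            rw [Real.sqrt_eq_rpow, ← Real.rpow_neg_one t,
              ← Real.rpow_natCast ((t ^ (-1:ℝ)) ^ ((1:ℝ)/2)) 3,
              ← Real.rpow_mul (by positivity), ← Real.rpow_mul ht0.le]
            norm_num
          rw [this]
          exact ENNReal.ofReal_le_ofReal (le_abs_self _)

private lemma stmt16_uniform (D : Set (EuclideanSpace ℝ (Fin 3)))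
    (a : EuclideanSpace ℝ (Fin 3)) :
    ∫⁻ z in D, ENNReal.ofReal ((‖z - a‖ ^ 2)⁻¹) ≤
      volume D + ∫⁻ w in Metric.ball (0 : EuclideanSpace ℝ (Fin 3)) 1,
        ENNReal.ofReal ((‖w‖ ^ 2)⁻¹) := by
  have hmeas : Measurable fun z : E3 => ENNReal.ofReal ((‖z - a‖ ^ 2)⁻¹) :=
    ((measurable_id.sub measurable_const).norm.pow_const 2).inv.ennreal_ofReal
  have hpt : ∀ z, ENNReal.ofReal ((‖z - a‖ ^ 2)⁻¹) ≤
      (Metric.ball a 1).indicator (fun z => ENNReal.ofReal ((‖z - a‖ ^ 2)⁻¹)) z + 1 := by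
    intro z
    by_cases hz : z ∈ Metric.ball a 1
    · rw [Set.indicator_of_mem hz]; exact le_self_add
    · rw [Set.indicator_of_notMem hz, zero_add]
      have h1 : (1:ℝ) ≤ ‖z - a‖ := by
        have := Metric.mem_ball.not.mp hz
        push_neg at this
        simpa [dist_eq_norm] using this
      calc ENNReal.ofReal ((‖z - a‖ ^ 2)⁻¹)
          ≤ ENNReal.ofReal 1 := ENNReal.ofReal_le_ofReal (by
            rw [inv_le_one_iff₀]
            right
            nlinarith)
        _ = 1 := ENNReal.ofReal_one
  have htrans : ∫⁻ z in Metric.ball a 1, ENNReal.ofReal ((‖z - a‖ ^ 2)⁻¹) =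
      ∫⁻ w in Metric.ball (0 : E3) 1, ENNReal.ofReal ((‖w‖ ^ 2)⁻¹) := by
    have hpre : (· - a) ⁻¹' Metric.ball (0 : E3) 1 = Metric.ball a 1 := by
      ext z
      simp [Metric.mem_ball, dist_eq_norm, dist_zero_right]
    have := (measurePreserving_sub_right (volume : Measure E3) a).setLIntegral_comp_preimage_emb
      (MeasurableEquiv.subRight a).measurableEmbedding
      (fun w => ENNReal.ofReal ((‖w‖ ^ 2)⁻¹)) (Metric.ball 0 1)
    rw [hpre] at this
    exact this
  calc ∫⁻ z in D, ENNReal.ofReal ((‖z - a‖ ^ 2)⁻¹)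
      ≤ ∫⁻ z in D, ((Metric.ball a 1).indicator
          (fun z => ENNReal.ofReal ((‖z - a‖ ^ 2)⁻¹)) z + 1) := lintegral_mono hpt
    _ = (∫⁻ z in D, (Metric.ball a 1).indicator
          (fun z => ENNReal.ofReal ((‖z - a‖ ^ 2)⁻¹)) z) + ∫⁻ _ in D, 1 :=
        lintegral_add_left (hmeas.indicator measurableSet_ball) _
    _ ≤ (∫⁻ z, (Metric.ball a 1).indicator
          (fun z => ENNReal.ofReal ((‖z - a‖ ^ 2)⁻¹)) z) + volume D := by
        gcongr
        · exact Measure.restrict_le_self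
        · rw [setLIntegral_one]
    _ = (∫⁻ z in Metric.ball a 1, ENNReal.ofReal ((‖z - a‖ ^ 2)⁻¹)) + volume D := by
        rw [lintegral_indicator measurableSet_ball]
    _ = volume D + ∫⁻ w in Metric.ball (0 : E3) 1, ENNReal.ofReal ((‖w‖ ^ 2)⁻¹) := by
        rw [htrans, add_comm]

end Aux

set_option maxHeartbeats 1000000 in
/-- For a bounded set `D ⊂ ℝ³`, the double integral
`∬_{D×D} |x-z|⁻¹ |y-z|⁻² |x-y|⁻¹ dz dy` is finite and bounded by `C ⟨x⟩⁻²`. -/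
theorem stmt16 (D : Set (EuclideanSpace ℝ (Fin 3))) (hD : Bornology.IsBounded D)
    (hDm : MeasurableSet D) :
    ∃ C : ℝ, ∀ x : EuclideanSpace ℝ (Fin 3),
      (∫⁻ y in D, ∫⁻ z in D,
          ENNReal.ofReal (‖x - z‖⁻¹ * (‖y - z‖ ^ 2)⁻¹ * ‖x - y‖⁻¹)) ≤
        ENNReal.ofReal (C * (1 + ‖x‖ ^ 2)⁻¹) := by
  classical
  obtain ⟨R₀, hR₀⟩ := hD.subset_closedBall 0
  set R : ℝ := max R₀ 0 with hRdef
  have hDR : D ⊆ Metric.closedBall 0 R :=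
    hR₀.trans (Metric.closedBall_subset_closedBall (le_max_left _ _))
  have hR0 : (0:ℝ) ≤ R := le_max_right _ _
  set B : ℝ≥0∞ := ∫⁻ w in Metric.ball (0 : EuclideanSpace ℝ (Fin 3)) 1,
    ENNReal.ofReal ((‖w‖ ^ 2)⁻¹) with hBdef
  have hμD : volume D < ⊤ := lt_of_le_of_lt (measure_mono hDR) measure_closedBall_lt_top
  set K : ℝ≥0∞ := volume D + B with hKdef
  have hKfin : K ≠ ⊤ := by
    rw [hKdef]
    exact ENNReal.add_ne_top.2 ⟨hμD.ne, stmt16_ball_lt_top.ne⟩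
  have vB : ∀ a : EuclideanSpace ℝ (Fin 3),
      ∫⁻ z in D, ENNReal.ofReal ((‖z - a‖ ^ 2)⁻¹) ≤ K := fun a => stmt16_uniform D a
  have vA : ∀ a : EuclideanSpace ℝ (Fin 3),
      ∫⁻ z in D, ENNReal.ofReal ((‖a - z‖ ^ 2)⁻¹) ≤ K := by
    intro a
    simp_rw [norm_sub_rev a]
    exact vB a
  set M : ℝ≥0∞ := 2*K*K + 4*(K*volume D) with hMdef
  have hMfin : M ≠ ⊤ := by
    rw [hMdef]
    refine ENNReal.add_ne_top.2 ⟨?_, ?_⟩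
    · exact ENNReal.mul_ne_top (ENNReal.mul_ne_top (by norm_num) hKfin) hKfin
    · exact ENNReal.mul_ne_top (by norm_num) (ENNReal.mul_ne_top hKfin hμD.ne)
  set m : ℝ := M.toReal with hmdef
  have hm0 : 0 ≤ m := ENNReal.toReal_nonneg
  have hMm : M = ENNReal.ofReal m := (ENNReal.ofReal_toReal hMfin).symm
  set T : ℝ := 2*R + 1 with hTdef
  have hT0 : (0:ℝ) ≤ T := by positivity
  refine ⟨(1 + T^2)*m + 8*m, fun x => ?_⟩
  -- measurability helpers
  have mq : ∀ a : EuclideanSpace ℝ (Fin 3),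
      Measurable fun z : EuclideanSpace ℝ (Fin 3) => ENNReal.ofReal ((‖a - z‖ ^ 2)⁻¹) :=
    fun a => ((measurable_const.sub measurable_id).norm.pow_const 2).inv.ennreal_ofReal
  have mG : Measurable fun p : (EuclideanSpace ℝ (Fin 3)) × (EuclideanSpace ℝ (Fin 3)) =>
      ENNReal.ofReal ((‖x - p.2‖ ^ 2)⁻¹ * (‖p.1 - p.2‖ ^ 2)⁻¹) := by
    apply Measurable.ennreal_ofReal
    exact (((measurable_const.sub measurable_snd).norm.pow_const 2).inv).mul
      (((measurable_fst.sub measurable_snd).norm.pow_const 2).inv)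
  rcases le_total ‖x‖ T with hcase | hcase
  · -- small x : uniform bound 2*K*K
    have hpt : ∀ y z : EuclideanSpace ℝ (Fin 3),
        ENNReal.ofReal (‖x - z‖⁻¹ * (‖y - z‖ ^ 2)⁻¹ * ‖x - y‖⁻¹) ≤
          ENNReal.ofReal ((‖x - z‖ ^ 2)⁻¹ * (‖y - z‖ ^ 2)⁻¹) +
          ENNReal.ofReal ((‖y - z‖ ^ 2)⁻¹ * (‖x - y‖ ^ 2)⁻¹) := by
      intro y z
      refine le_trans (ENNReal.ofReal_le_ofReal ?_) ENNReal.ofReal_add_le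
      have hq : (0:ℝ) ≤ (‖y - z‖ ^ 2)⁻¹ := by positivity
      have hbase : ‖x - z‖⁻¹ * ‖x - y‖⁻¹ ≤ (‖x - z‖⁻¹)^2 + (‖x - y‖⁻¹)^2 := by
        nlinarith [sq_nonneg (‖x - z‖⁻¹ - ‖x - y‖⁻¹), sq_nonneg ‖x - z‖⁻¹,
          sq_nonneg ‖x - y‖⁻¹]
      calc ‖x - z‖⁻¹ * (‖y - z‖ ^ 2)⁻¹ * ‖x - y‖⁻¹
          = (‖y - z‖ ^ 2)⁻¹ * (‖x - z‖⁻¹ * ‖x - y‖⁻¹) := by ring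
        _ ≤ (‖y - z‖ ^ 2)⁻¹ * ((‖x - z‖⁻¹)^2 + (‖x - y‖⁻¹)^2) :=
            mul_le_mul_of_nonneg_left hbase hq
        _ = (‖x - z‖ ^ 2)⁻¹ * (‖y - z‖ ^ 2)⁻¹ + (‖y - z‖ ^ 2)⁻¹ * (‖x - y‖ ^ 2)⁻¹ := by
            rw [inv_pow, inv_pow]; ring
    have hbound : (∫⁻ y in D, ∫⁻ z in D,
        ENNReal.ofReal (‖x - z‖⁻¹ * (‖y - z‖ ^ 2)⁻¹ * ‖x - y‖⁻¹)) ≤ 2*K*K := by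
      calc (∫⁻ y in D, ∫⁻ z in D,
            ENNReal.ofReal (‖x - z‖⁻¹ * (‖y - z‖ ^ 2)⁻¹ * ‖x - y‖⁻¹))
          ≤ ∫⁻ y in D, ∫⁻ z in D,
            (ENNReal.ofReal ((‖x - z‖ ^ 2)⁻¹ * (‖y - z‖ ^ 2)⁻¹) +
             ENNReal.ofReal ((‖y - z‖ ^ 2)⁻¹ * (‖x - y‖ ^ 2)⁻¹)) :=
            lintegral_mono fun y => lintegral_mono fun z => hpt y z
        _ = ∫⁻ y in D, ((∫⁻ z in D, ENNReal.ofReal ((‖x - z‖ ^ 2)⁻¹ * (‖y - z‖ ^ 2)⁻¹)) +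
             ∫⁻ z in D, ENNReal.ofReal ((‖y - z‖ ^ 2)⁻¹ * (‖x - y‖ ^ 2)⁻¹)) := by
            refine lintegral_congr fun y => lintegral_add_left ?_ _
            exact ((((measurable_const.sub measurable_id).norm.pow_const 2).inv).mul
              (((measurable_const.sub measurable_id).norm.pow_const 2).inv)).ennreal_ofReal
        _ = (∫⁻ y in D, ∫⁻ z in D, ENNReal.ofReal ((‖x - z‖ ^ 2)⁻¹ * (‖y - z‖ ^ 2)⁻¹)) +
            ∫⁻ y in D, ∫⁻ z in D, ENNReal.ofReal ((‖y - z‖ ^ 2)⁻¹ * (‖x - y‖ ^ 2)⁻¹) := by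
            apply lintegral_add_left
            exact mG.lintegral_prod_right'
        _ ≤ K*K + K*K := by
            gcongr
            · -- swap order and integrate
              rw [lintegral_lintegral_swap mG.aemeasurable]
              calc ∫⁻ z in D, ∫⁻ y in D,
                    ENNReal.ofReal ((‖x - z‖ ^ 2)⁻¹ * (‖y - z‖ ^ 2)⁻¹)
                  = ∫⁻ z in D, ENNReal.ofReal ((‖x - z‖ ^ 2)⁻¹) *
                      ∫⁻ y in D, ENNReal.ofReal ((‖y - z‖ ^ 2)⁻¹) := by
                    refine lintegral_congr fun z => ?_
                    rw [← lintegral_const_mul' _ _ ENNReal.ofReal_ne_top]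
                    refine lintegral_congr fun y => ?_
                    rw [← ENNReal.ofReal_mul (by positivity)]
                _ ≤ ∫⁻ z in D, ENNReal.ofReal ((‖x - z‖ ^ 2)⁻¹) * K := by
                    apply lintegral_mono
                    intro z
                    exact mul_le_mul_right (vB z) _
                _ = (∫⁻ z in D, ENNReal.ofReal ((‖x - z‖ ^ 2)⁻¹)) * K :=
                    lintegral_mul_const' _ _ hKfin
                _ ≤ K*K := mul_le_mul_left (vA x) _
            · calc ∫⁻ y in D, ∫⁻ z in D,
                    ENNReal.ofReal ((‖y - z‖ ^ 2)⁻¹ * (‖x - y‖ ^ 2)⁻¹)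
                  = ∫⁻ y in D, (∫⁻ z in D, ENNReal.ofReal ((‖y - z‖ ^ 2)⁻¹)) *
                      ENNReal.ofReal ((‖x - y‖ ^ 2)⁻¹) := by
                    refine lintegral_congr fun y => ?_
                    rw [← lintegral_mul_const' _ _ ENNReal.ofReal_ne_top]
                    refine lintegral_congr fun z => ?_
                    rw [← ENNReal.ofReal_mul (by positivity)]
                _ ≤ ∫⁻ y in D, K * ENNReal.ofReal ((‖x - y‖ ^ 2)⁻¹) := by
                    apply lintegral_mono
                    intro y
                    exact mul_le_mul_left (vA y) _
                _ = K * ∫⁻ y in D, ENNReal.ofReal ((‖x - y‖ ^ 2)⁻¹) :=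
                    lintegral_const_mul' _ _ hKfin
                _ ≤ K*K := mul_le_mul_right (vA x) _
        _ = 2*K*K := by ring
    refine hbound.trans ?_
    have h2KK : 2*K*K ≤ M := le_self_add
    refine (h2KK.trans_eq hMm).trans (ENNReal.ofReal_le_ofReal ?_)
    have h0 : (0:ℝ) < 1 + ‖x‖^2 := by positivity
    have hx2 : ‖x‖^2 ≤ T^2 := by nlinarith [norm_nonneg x]
    have hmain : m * (1 + ‖x‖^2) ≤ (1 + T^2)*m + 8*m := by nlinarith
    calc m = m * (1 + ‖x‖^2) * (1 + ‖x‖^2)⁻¹ := by field_simp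
      _ ≤ ((1 + T^2)*m + 8*m) * (1 + ‖x‖^2)⁻¹ :=
          mul_le_mul_of_nonneg_right hmain (by positivity)
  · -- large x
    have hx1 : (1:ℝ) ≤ ‖x‖ := by nlinarith
    have hx2R : 2*R ≤ ‖x‖ := by nlinarith
    have hxpos : (0:ℝ) < ‖x‖ := lt_of_lt_of_le one_pos hx1
    have hinv : ∀ w : EuclideanSpace ℝ (Fin 3), w ∈ D → ‖x - w‖⁻¹ ≤ 2*‖x‖⁻¹ := by
      intro w hw
      have hwR : ‖w‖ ≤ R := by
        have := hDR hw
        simpa [Metric.mem_closedBall, dist_zero_right] using this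
      have h1 : ‖x‖/2 ≤ ‖x - w‖ := by
        have := norm_sub_norm_le x w
        linarith
      have h2 : (0:ℝ) < ‖x‖/2 := by linarith
      calc ‖x - w‖⁻¹ ≤ (‖x‖/2)⁻¹ := by
            apply inv_anti₀ h2 h1
        _ = 2*‖x‖⁻¹ := by
            rw [inv_div, div_eq_mul_inv]
    have hpt : ∀ y ∈ D, ∀ z ∈ D,
        ENNReal.ofReal (‖x - z‖⁻¹ * (‖y - z‖ ^ 2)⁻¹ * ‖x - y‖⁻¹) ≤
          ENNReal.ofReal (4*(‖x‖^2)⁻¹) * ENNReal.ofReal ((‖y - z‖ ^ 2)⁻¹) := by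
      intro y hy z hz
      rw [← ENNReal.ofReal_mul (by positivity)]
      refine ENNReal.ofReal_le_ofReal ?_
      have hq : (0:ℝ) ≤ (‖y - z‖ ^ 2)⁻¹ := by positivity
      calc ‖x - z‖⁻¹ * (‖y - z‖ ^ 2)⁻¹ * ‖x - y‖⁻¹
          ≤ (2*‖x‖⁻¹) * (‖y - z‖ ^ 2)⁻¹ * (2*‖x‖⁻¹) := by
            refine mul_le_mul (mul_le_mul (hinv z hz) le_rfl hq (by positivity))
              (hinv y hy) (by positivity) (by positivity)
        _ = 4*(‖x‖^2)⁻¹ * (‖y - z‖ ^ 2)⁻¹ := by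
            rw [← inv_pow]; ring
    have hbound : (∫⁻ y in D, ∫⁻ z in D,
        ENNReal.ofReal (‖x - z‖⁻¹ * (‖y - z‖ ^ 2)⁻¹ * ‖x - y‖⁻¹)) ≤
          ENNReal.ofReal (4*(‖x‖^2)⁻¹) * (K * volume D) := by
      calc (∫⁻ y in D, ∫⁻ z in D,
            ENNReal.ofReal (‖x - z‖⁻¹ * (‖y - z‖ ^ 2)⁻¹ * ‖x - y‖⁻¹))
          ≤ ∫⁻ y in D, ENNReal.ofReal (4*(‖x‖^2)⁻¹) * K := by
            refine setLIntegral_mono_ae (by fun_prop) (Filter.Eventually.of_forall ?_)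
            intro y hy
            calc (∫⁻ z in D, ENNReal.ofReal (‖x - z‖⁻¹ * (‖y - z‖ ^ 2)⁻¹ * ‖x - y‖⁻¹))
                ≤ ∫⁻ z in D, ENNReal.ofReal (4*(‖x‖^2)⁻¹) *
                    ENNReal.ofReal ((‖y - z‖ ^ 2)⁻¹) := by
                  refine setLIntegral_mono_ae ?_ (Filter.Eventually.of_forall ?_)
                  · exact (measurable_const.mul (mq y)).aemeasurable
                  · intro z hz
                    exact hpt y hy z hz
              _ = ENNReal.ofReal (4*(‖x‖^2)⁻¹) *
                    ∫⁻ z in D, ENNReal.ofReal ((‖y - z‖ ^ 2)⁻¹) :=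
                  lintegral_const_mul' _ _ ENNReal.ofReal_ne_top
              _ ≤ ENNReal.ofReal (4*(‖x‖^2)⁻¹) * K := mul_le_mul_right (vA y) _
        _ = ENNReal.ofReal (4*(‖x‖^2)⁻¹) * K * volume D := setLIntegral_const _ _
        _ = ENNReal.ofReal (4*(‖x‖^2)⁻¹) * (K * volume D) := by rw [mul_assoc]
    refine hbound.trans ?_
    have h4 : ENNReal.ofReal (4*(‖x‖^2)⁻¹) * (K * volume D) ≤
        ENNReal.ofReal ((‖x‖^2)⁻¹) * M := by
      have : ENNReal.ofReal (4*(‖x‖^2)⁻¹) = ENNReal.ofReal ((‖x‖^2)⁻¹) * 4 := by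
        rw [← ENNReal.ofReal_ofNat 4, ← ENNReal.ofReal_mul (by norm_num)]
        ring_nf
      rw [this, mul_assoc]
      refine mul_le_mul_right ?_ _
      exact le_add_self
    refine h4.trans ?_
    rw [hMm, ← ENNReal.ofReal_mul (by positivity)]
    refine ENNReal.ofReal_le_ofReal ?_
    have hs1 : (1:ℝ) ≤ ‖x‖^2 := by nlinarith
    have h0 : (0:ℝ) < ‖x‖^2 := by positivity
    have h1 : (0:ℝ) < 1 + ‖x‖^2 := by positivity
    rw [inv_mul_eq_div, ← div_eq_mul_inv, div_le_div_iff₀ h0 h1]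
    nlinarith [mul_le_mul_of_nonneg_left hs1 hm0,
      mul_nonneg (mul_nonneg (by positivity : (0:ℝ) ≤ 1 + T^2) hm0) (le_trans zero_le_one hs1)]
end
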